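/- Conversely, if γ < ω₁ and f is an automorphism of M_{<γ}, then there exists ν : γ → G satisfying the support-finiteness condition such that f = f_ν. -/

import Mathlib

noncomputable section
open Set

/-- `G` is the vector space over `ℤ/2ℤ` with basis indexed by `ℕ`. -/
abbrev G : Type := ℕ →₀ ZMod 2

/-- The basis element `xₙ`. -/
def xg (n : ℕ) : G := Finsupp.single n 1

/-- `G⁰ₙ`: the subspace generated by the `x_k` for `k ≠ n`. -/
def G0 (n : ℕ) : Set G :=
  (Submodule.span (ZMod 2) {y : G | ∃ k : ℕ, k ≠ n ∧ y = xg k} : Submodule (ZMod 2) G)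

/-- `G¹ₙ = xₙ + G⁰ₙ`, the nontrivial coset. -/
def G1 (n : ℕ) : Set G := (fun z => xg n + z) '' G0 n

/-- The family `𝒢 = {Gˡₙ : n < ω, l ∈ {0,1}}`. -/
def Gfam : Set (Set G) := {S | ∃ n : ℕ, S = G0 n ∨ S = G1 n}

/-- The first uncountable ordinal. -/
def omega1 : Ordinal := (Cardinal.aleph 1).ord

/-- The universe of the structure `M`: elements of the parts `A_α = {α} × G`
and of the parts `B_α ⊆ {η : α → 𝒢}` (sequences are padded by `∅` beyond `α`). -/
inductive MU : Type 1 where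
  | a : Ordinal → G → MU
  | b : Ordinal → (Ordinal → Set G) → MU

/-- The condition for `η` (as a total function, padded by `∅`) to code a member of `B_α`:
its values below `α` are in `𝒢` and for some `n` it equals `G⁰ₙ` with finitely many
exceptions. -/
def okB (α : Ordinal) (η : Ordinal → Set G) : Prop :=
  (∀ β, β < α → η β ∈ Gfam) ∧ (∀ β, ¬ β < α → η β = ∅) ∧
    ∃ n : ℕ, {β : Ordinal | β < α ∧ η β ≠ G0 n}.Finite

/-- The universe of `M_{<γ}`, i.e. `∪ {A_β ∪ B_β : β < γ}`. -/
def MUuniv (γ : Ordinal) : Set MU :=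
  {u | match u with
       | .a α _ => α < γ
       | .b α η => α < γ ∧ okB α η}

/-- `u` belongs to the `A`-part (the predicate `P₁`; `P₂` is its negation). -/
def isA : MU → Prop
  | .a _ _ => True
  | .b _ _ => False

/-- The index `α` of the part `A_α` or `B_α` containing the element. -/
def idx : MU → Ordinal
  | .a α _ => α
  | .b α _ => α

/-- The relation `E₁`. -/
def E1 (u v : MU) : Prop := isA u ∧ isA v ∧ idx u ≤ idx v

/-- The relation `E₂`. -/
def E2 (u v : MU) : Prop := ¬ isA u ∧ ¬ isA v ∧ idx u ≤ idx v

/-- The unary function `F_y`: translation by `y` on each `A_α`, identity on each `B_α`. -/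
def Fy (y : G) : MU → MU
  | .a α g => .a α (g + y)
  | .b α η => .b α η

/-- The relation `R = {(η, (α,x)) : α < lh η, x ∈ η(α)}`. -/
def Rmem (u v : MU) : Prop :=
  ∃ (β : Ordinal) (η : Ordinal → Set G) (α : Ordinal) (g : G),
    u = .b β η ∧ v = .a α g ∧ α < β ∧ g ∈ η α

/-- `f` is an automorphism of the restriction of `M` to the set `S`. -/
structure IsAut (S : Set MU) (f : MU → MU) : Prop where
  bij : Set.BijOn f S S
  p1 : ∀ u ∈ S, (isA (f u) ↔ isA u)
  e1 : ∀ u ∈ S, ∀ v ∈ S, (E1 (f u) (f v) ↔ E1 u v)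
  e2 : ∀ u ∈ S, ∀ v ∈ S, (E2 (f u) (f v) ↔ E2 u v)
  fy : ∀ (y : G), ∀ u ∈ S, f (Fy y u) = Fy y (f u)
  r : ∀ u ∈ S, ∀ v ∈ S, (Rmem (f u) (f v) ↔ Rmem u v)

/-- The map `f_ν`: translation by `ν(α)` on `A_α`, coset translation on the `B`-parts. -/
def fnu (ν : Ordinal → G) : MU → MU
  | .a α g => .a α (g + ν α)
  | .b α η => .b α (fun β => (fun z => ν β + z) '' η β)

/-- The support-finiteness condition on `ν : γ → G`:
for every `β < γ` and every `n`, `{α < β : n ∈ supp ν(α)}` is finite. -/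
def SuppFin (γ : Ordinal) (ν : Ordinal → G) : Prop :=
  ∀ β < γ, ∀ n : ℕ, {α : Ordinal | α < β ∧ n ∈ (ν α).support}.Finite

/-! ### Auxiliary lemmas -/

instance : Nonempty MU := ⟨.a 0 0⟩

lemma zmod2_cases (x : ZMod 2) : x = 0 ∨ x = 1 := by revert x; decide

lemma zmod2_add_self (x : ZMod 2) : x + x = 0 := by revert x; decide

lemma gadd_self (a : G) : a + a = 0 := by
  ext n; simp [Finsupp.add_apply, zmod2_add_self]

lemma gadd_cancel (a b : G) : a + (a + b) = b := by
  rw [← add_assoc, gadd_self, zero_add]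

lemma mem_G0 (n : ℕ) (y : G) : y ∈ G0 n ↔ y n = 0 := by
  constructor
  · intro hy
    have hker : (Submodule.span (ZMod 2) {y : G | ∃ k : ℕ, k ≠ n ∧ y = xg k}) ≤
        LinearMap.ker (Finsupp.lapply n) := by
      rw [Submodule.span_le]
      rintro z ⟨k, hk, rfl⟩
      simp [LinearMap.mem_ker, xg, Finsupp.single_eq_of_ne' hk]
    have := hker hy
    simpa [LinearMap.mem_ker] using this
  · intro hy
    have : y = y.sum Finsupp.single := (Finsupp.sum_single y).symm
    rw [this, Finsupp.sum]
    show _ ∈ (Submodule.span (ZMod 2) {y : G | ∃ k : ℕ, k ≠ n ∧ y = xg k})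
    apply Submodule.sum_mem
    intro k hk
    have hkn : k ≠ n := by
      rintro rfl; exact (Finsupp.mem_support_iff.mp hk) hy
    have hsingle : Finsupp.single k (y k) = (y k) • xg k := by
      simp [xg, Finsupp.smul_single]
    rw [hsingle]
    exact Submodule.smul_mem _ _ (Submodule.subset_span ⟨k, hkn, rfl⟩)

lemma mem_image_add (c : G) (A : Set G) (x : G) :
    x ∈ (fun z => c + z) '' A ↔ c + x ∈ A := by
  constructor
  · rintro ⟨z, hz, rfl⟩; rwa [gadd_cancel]
  · intro h; exact ⟨c + x, h, gadd_cancel c x⟩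

lemma mem_G1 (n : ℕ) (y : G) : y ∈ G1 n ↔ y n = 1 := by
  have hx : (xg n) n = 1 := by simp [xg]
  rw [G1, mem_image_add, mem_G0, Finsupp.add_apply, hx]
  constructor
  · intro h
    rcases zmod2_cases (y n) with h0 | h1
    · rw [h0] at h; exact absurd h (by decide)
    · exact h1
  · intro h; rw [h]; decide

lemma image_add_G0 (c : G) (n : ℕ) :
    (fun z => c + z) '' G0 n = if c n = 0 then G0 n else G1 n := by
  ext x
  rw [mem_image_add, mem_G0, Finsupp.add_apply]
  rcases zmod2_cases (c n) with h | h
  · rw [h, if_pos rfl, mem_G0]; simp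
  · rw [h, if_neg (by decide), mem_G1]
    rcases zmod2_cases (x n) with h' | h' <;> rw [h'] <;> decide

lemma G0_ne_G0 {n m : ℕ} (h : n ≠ m) : G0 n ≠ G0 m := by
  intro he
  have h1 : xg m ∈ G0 n := (mem_G0 n _).mpr (by simp [xg, Finsupp.single_eq_of_ne' (Ne.symm h)])
  rw [he, mem_G0] at h1
  simp [xg] at h1

lemma G1_ne_G0 (n m : ℕ) : G1 n ≠ G0 m := by
  intro he
  have h0 : (0 : G) ∈ G0 m := (mem_G0 m _).mpr rfl
  rw [← he, mem_G1] at h0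
  simp at h0

lemma memA_iff {γ α : Ordinal} {y : G} : (MU.a α y) ∈ MUuniv γ ↔ α < γ := Iff.rfl

lemma memB_iff {γ α : Ordinal} {η : Ordinal → Set G} :
    (MU.b α η) ∈ MUuniv γ ↔ α < γ ∧ okB α η := Iff.rfl

lemma Rmem_iff (β : Ordinal) (η : Ordinal → Set G) (α : Ordinal) (g : G) :
    Rmem (.b β η) (.a α g) ↔ α < β ∧ g ∈ η α := by
  constructor
  · rintro ⟨β', η', α', g', h1, h2, h3, h4⟩
    injection h1 with e1 e2
    injection h2 with e3 e4
    subst e1; subst e2; subst e3; subst e4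
    exact ⟨h3, h4⟩
  · rintro ⟨h1, h2⟩; exact ⟨β, η, α, g, rfl, rfl, h1, h2⟩

/-- A canonical element of `B_δ`. -/
def canon (n : ℕ) (δ : Ordinal) : Ordinal → Set G := fun α => if α < δ then G0 n else ∅

lemma okB_canon (n : ℕ) (δ : Ordinal) : okB δ (canon n δ) := by
  refine ⟨?_, ?_, n, ?_⟩
  · intro β hβ; rw [canon, if_pos hβ]; exact ⟨n, Or.inl rfl⟩
  · intro β hβ; rw [canon, if_neg hβ]
  · have : {β : Ordinal | β < δ ∧ canon n δ β ≠ G0 n} = ∅ := by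
      ext β; simp only [Set.mem_setOf_eq, Set.mem_empty_iff_false, iff_false, not_and]
      intro hβ; rw [canon, if_pos hβ]; simp
    rw [this]; exact Set.finite_empty

lemma isA_a (α : Ordinal) (y : G) : isA (.a α y) := trivial

lemma not_isA_b (α : Ordinal) (η : Ordinal → Set G) : ¬ isA (.b α η) := fun h => h

/-- Half of the key order argument: any map preserving `P₁` and `E₁`
does not decrease indices of `A`-elements. -/
lemma geA (γ : Ordinal) (f : MU → MU)
    (hp1 : ∀ u ∈ MUuniv γ, (isA (f u) ↔ isA u))
    (he1 : ∀ u ∈ MUuniv γ, ∀ v ∈ MUuniv γ, (E1 (f u) (f v) ↔ E1 u v)) :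
    ∀ α, α < γ → ∀ y : G, α ≤ idx (f (.a α y)) := by
  intro α
  induction α using Ordinal.induction with
  | h α IH =>
    intro hα y
    apply le_of_forall_lt
    intro δ hδ
    have hδγ : δ < γ := hδ.trans hα
    have hu : (MU.a α y) ∈ MUuniv γ := hα
    have hv : (MU.a δ 0) ∈ MUuniv γ := hδγ
    have hne : ¬ E1 (.a α y) (.a δ 0) := by
      rintro ⟨-, -, h⟩
      exact absurd h (not_le.mpr hδ)
    have hne2 : ¬ E1 (f (.a α y)) (f (.a δ 0)) :=
      fun h => hne ((he1 _ hu _ hv).mp h)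
    have hA1 : isA (f (.a α y)) := (hp1 _ hu).mpr trivial
    have hA2 : isA (f (.a δ 0)) := (hp1 _ hv).mpr trivial
    have hlt : idx (f (.a δ 0)) < idx (f (.a α y)) :=
      not_le.mp (fun h => hne2 ⟨hA1, hA2, h⟩)
    exact lt_of_le_of_lt (IH δ hδ hδγ 0) hlt

/-- The analogue for `B`-elements. -/
lemma geB (γ : Ordinal) (f : MU → MU)
    (hp1 : ∀ u ∈ MUuniv γ, (isA (f u) ↔ isA u))
    (he2 : ∀ u ∈ MUuniv γ, ∀ v ∈ MUuniv γ, (E2 (f u) (f v) ↔ E2 u v)) :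
    ∀ α, α < γ → ∀ η : Ordinal → Set G, okB α η → α ≤ idx (f (.b α η)) := by
  intro α
  induction α using Ordinal.induction with
  | h α IH =>
    intro hα η hok
    apply le_of_forall_lt
    intro δ hδ
    have hδγ : δ < γ := hδ.trans hα
    have hu : (MU.b α η) ∈ MUuniv γ := ⟨hα, hok⟩
    have hv : (MU.b δ (canon 0 δ)) ∈ MUuniv γ := ⟨hδγ, okB_canon 0 δ⟩
    have hne : ¬ E2 (.b α η) (.b δ (canon 0 δ)) := by
      rintro ⟨-, -, h⟩
      exact absurd h (not_le.mpr hδ)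
    have hne2 : ¬ E2 (f (.b α η)) (f (.b δ (canon 0 δ))) :=
      fun h => hne ((he2 _ hu _ hv).mp h)
    have hA1 : ¬ isA (f (.b α η)) := fun h => not_isA_b α η ((hp1 _ hu).mp h)
    have hA2 : ¬ isA (f (.b δ (canon 0 δ))) :=
      fun h => not_isA_b δ _ ((hp1 _ hv).mp h)
    have hlt : idx (f (.b δ (canon 0 δ))) < idx (f (.b α η)) :=
      not_le.mp (fun h => hne2 ⟨hA1, hA2, h⟩)
    exact lt_of_le_of_lt (IH δ hδ hδγ _ (okB_canon 0 δ)) hlt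



/-- Conversely, if `γ < ω₁` and `f` is an automorphism of `M_{<γ}`,
then there exists `ν : γ → G` satisfying the support-finiteness condition
such that `f = f_ν` (on the universe of `M_{<γ}`). -/

theorem stmt6 (γ : Ordinal) (hγ : γ < omega1) (f : MU → MU)
    (hf : IsAut (MUuniv γ) f) :
    ∃ ν : Ordinal → G, SuppFin γ ν ∧ Set.EqOn f (fnu ν) (MUuniv γ) := by
  classical
  have hmaps := hf.bij.mapsTo
  have hinv : Set.InvOn (Function.invFunOn f (MUuniv γ)) f (MUuniv γ) (MUuniv γ) :=
    hf.bij.invOn_invFunOn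
  set g := Function.invFunOn f (MUuniv γ) with hgdef
  have hgf : ∀ u ∈ MUuniv γ, g (f u) = u := fun u hu => hinv.1 hu
  have hfg : ∀ u ∈ MUuniv γ, f (g u) = u := fun u hu => hinv.2 hu
  have hgmaps : Set.MapsTo g (MUuniv γ) (MUuniv γ) := by
    intro u hu
    obtain ⟨v, hv, hfv⟩ := hf.bij.surjOn hu
    rw [← hfv, hgf v hv]; exact hv
  have hgp1 : ∀ u ∈ MUuniv γ, (isA (g u) ↔ isA u) := by
    intro u hu
    have h := hf.p1 (g u) (hgmaps hu)
    rw [hfg u hu] at h; exact h.symm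
  have hge1 : ∀ u ∈ MUuniv γ, ∀ v ∈ MUuniv γ, (E1 (g u) (g v) ↔ E1 u v) := by
    intro u hu v hv
    have h := hf.e1 (g u) (hgmaps hu) (g v) (hgmaps hv)
    rw [hfg u hu, hfg v hv] at h; exact h.symm
  have hge2 : ∀ u ∈ MUuniv γ, ∀ v ∈ MUuniv γ, (E2 (g u) (g v) ↔ E2 u v) := by
    intro u hu v hv
    have h := hf.e2 (g u) (hgmaps hu) (g v) (hgmaps hv)
    rw [hfg u hu, hfg v hv] at h; exact h.symm
  -- `f` preserves the index of `A`-elements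
  have hidxA : ∀ α, α < γ → ∀ y : G, ∃ z : G, f (.a α y) = .a α z := by
    intro α hα y
    have hu : (MU.a α y) ∈ MUuniv γ := hα
    have hA : isA (f (.a α y)) := (hf.p1 _ hu).mpr trivial
    have hmem : f (.a α y) ∈ MUuniv γ := hmaps hu
    cases hfu : f (.a α y) with
    | b β η => rw [hfu] at hA; exact absurd hA (not_isA_b _ _)
    | a β z =>
      have h1 : α ≤ β := by
        have h := geA γ f hf.p1 hf.e1 α hα y
        rwa [hfu] at h
      have hβγ : β < γ := by rw [hfu] at hmem; exact hmem
      have h2 : β ≤ α := by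
        have h := geA γ g hgp1 hge1 β hβγ z
        have hg : g (.a β z) = .a α y := by rw [← hfu, hgf _ hu]
        rwa [hg] at h
      exact ⟨z, by rw [le_antisymm h2 h1]⟩
  choose Z hZ using hidxA
  set ν : Ordinal → G := fun α => if h : α < γ then Z α h 0 else 0 with hν
  have hν0 : ∀ α, ∀ h : α < γ, f (.a α 0) = .a α (ν α) := by
    intro α h
    have hn : ν α = Z α h 0 := by simp only [hν]; rw [dif_pos h]
    rw [hn]; exact hZ α h 0
  have hνa : ∀ α, α < γ → ∀ y : G, f (.a α y) = .a α (y + ν α) := by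
    intro α hα y
    have h0 : (MU.a α 0) ∈ MUuniv γ := hα
    have he : MU.a α y = Fy y (.a α 0) := by show _ = MU.a α (0 + y); rw [zero_add]
    rw [he, hf.fy y _ h0, hν0 α hα]
    show MU.a α (ν α + y) = _
    rw [add_comm]
  have hνb : ∀ α, α < γ → ∀ η : Ordinal → Set G, okB α η →
      f (.b α η) = .b α (fun β => (fun z => ν β + z) '' η β) := by
    intro α hα η hok
    have hu : (MU.b α η) ∈ MUuniv γ := ⟨hα, hok⟩
    have hmem : f (.b α η) ∈ MUuniv γ := hmaps hu
    have hA : ¬ isA (f (.b α η)) := fun h => not_isA_b _ _ ((hf.p1 _ hu).mp h)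
    cases hfu : f (.b α η) with
    | a β z => rw [hfu] at hA; exact absurd trivial hA
    | b β η' =>
      have hβγ : β < γ := by rw [hfu] at hmem; exact hmem.1
      have hok' : okB β η' := by rw [hfu] at hmem; exact hmem.2
      have h1 : α ≤ β := by
        have h := geB γ f hf.p1 hf.e2 α hα η hok
        rwa [hfu] at h
      have h2 : β ≤ α := by
        have h := geB γ g hgp1 hge2 β hβγ η' hok'
        have hg : g (.b β η') = .b α η := by rw [← hfu, hgf _ hu]
        rwa [hg] at h
      have hβα : β = α := le_antisymm h2 h1
      subst hβα
      congr 1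
      funext δ
      by_cases hδ : δ < β
      · have hδγ : δ < γ := hδ.trans hβγ
        ext x
        have key : ∀ z : G, z + ν δ ∈ η' δ ↔ z ∈ η δ := by
          intro z
          have hv : (MU.a δ z) ∈ MUuniv γ := hδγ
          have hr := hf.r _ hu _ hv
          rw [hfu, hνa δ hδγ z, Rmem_iff, Rmem_iff] at hr
          constructor
          · intro h; exact (hr.mp ⟨hδ, h⟩).2
          · intro h; exact (hr.mpr ⟨hδ, h⟩).2
        rw [mem_image_add]
        have hkey := key (ν δ + x)
        rw [add_comm (ν δ) x, add_assoc, gadd_self, add_zero, ← add_comm (ν δ) x] at hkey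
        exact hkey
      · have he1 : η' δ = ∅ := hok'.2.1 δ hδ
        have he2 : η δ = ∅ := hok.2.1 δ hδ
        rw [he1, he2, Set.image_empty]
  refine ⟨ν, ?_, ?_⟩
  · -- the support-finiteness condition
    intro β hβ n
    have hok := okB_canon n β
    have hu : (MU.b β (canon n β)) ∈ MUuniv γ := ⟨hβ, hok⟩
    have hmem : f (.b β (canon n β)) ∈ MUuniv γ := hmaps hu
    rw [hνb β hβ _ hok] at hmem
    obtain ⟨-, -, m, hm⟩ := hmem.2
    by_cases hmn : m = n
    · subst hmn
      apply hm.subset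
      rintro δ ⟨hδβ, hsupp⟩
      refine ⟨hδβ, ?_⟩
      show (fun z => ν δ + z) '' (canon m β δ) ≠ G0 m
      rw [show canon m β δ = G0 m from if_pos hδβ, image_add_G0,
          if_neg (Finsupp.mem_support_iff.mp hsupp)]
      exact G1_ne_G0 m m
    · have hall : {δ : Ordinal | δ < β} ⊆
          {δ : Ordinal | δ < β ∧ (fun β' => (fun z => ν β' + z) '' (canon n β β')) δ ≠ G0 m} := by
        intro δ hδ
        refine ⟨hδ, ?_⟩
        show (fun z => ν δ + z) '' (canon n β δ) ≠ G0 m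
        rw [show canon n β δ = G0 n from if_pos hδ, image_add_G0]
        split
        · exact G0_ne_G0 (fun h => hmn h.symm)
        · exact G1_ne_G0 n m
      exact (hm.subset hall).subset (fun δ hδ => hδ.1)
  · -- `f = f_ν` on the universe
    intro u hu
    cases u with
    | a α y =>
      have hα : α < γ := hu
      show f _ = _
      rw [hνa α hα y]; rfl
    | b α η =>
      show f _ = _
      rw [hνb α hu.1 η hu.2]; rfl
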